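/- Proper condition for k-spaces: if X, Y, Z are k-spaces and f : X ×_k Y → Z is continuous (where ×_k is the k-ified product), then the function g : X → kM(Y,Z) defined by g(x)(y) = f(x,y) is well-defined and continuous, where M(Y,Z) carries the compact-open topology and kM(Y,Z) is its k-ification. -/
import Mathlib


open TopologicalSpace Topology

universe u

/-- The k-ification: the final topology on `X` relative to all continuous maps
from compact Hausdorff spaces into `X`. -/
def kTop (X : Type u) [TopologicalSpace X] : TopologicalSpace X :=
  ⨆ (C : CompHaus.{u}) (g : C → X) (_ : Continuous g),
    TopologicalSpace.coinduced g inferInstance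

lemma kTop_le {W : Type u} [tW : TopologicalSpace W] : kTop W ≤ tW := by
  refine iSup_le fun C => iSup_le fun g => iSup_le fun hg => ?_
  exact continuous_iff_coinduced_le.1 hg

lemma probe_continuous {W : Type u} [tW : TopologicalSpace W] (C : CompHaus.{u}) (c : C → W)
    (hc : Continuous c) : Continuous[_, kTop W] c := by
  rw [continuous_iff_coinduced_le]
  exact le_iSup_of_le C (le_iSup_of_le c (le_iSup_of_le hc le_rfl))

lemma isOpen_kTop_iff {W : Type u} [tW : TopologicalSpace W] {s : Set W} :
    IsOpen[kTop W] s ↔ ∀ (C : CompHaus.{u}) (g : C → W), Continuous g → IsOpen (g ⁻¹' s) := by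
  rw [kTop, isOpen_iSup_iff]
  refine forall_congr' fun C => ?_
  rw [isOpen_iSup_iff]
  refine forall_congr' fun g => ?_
  rw [isOpen_iSup_iff]
  exact forall_congr' fun hg => isOpen_coinduced

lemma continuous_from_kTop {W W' : Type u} [tW : TopologicalSpace W] {t' : TopologicalSpace W'}
    (h : W → W')
    (H : ∀ (C : CompHaus.{u}) (c : C → W), Continuous c → Continuous[_, t'] (h ∘ c)) :
    Continuous[kTop W, t'] h := by
  rw [continuous_def]
  intro s hs
  rw [isOpen_kTop_iff]
  intro C c hc
  exact (H C c hc).isOpen_preimage s hs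

lemma kTop_mono {A B : Type u} [tA : TopologicalSpace A] [tB : TopologicalSpace B]
    {h : A → B} (hh : Continuous h) : Continuous[kTop A, kTop B] h :=
  continuous_from_kTop h fun C c hc => probe_continuous C (h ∘ c) (hh.comp hc)

/-- The product of a compact Hausdorff space with a k-space is a k-space. -/
lemma kTop_prod_compHaus {C Y : Type u} [tC : TopologicalSpace C] [CompactSpace C] [T2Space C]
    [tY : TopologicalSpace Y] (hY : kTop Y = tY) :
    kTop (C × Y) = instTopologicalSpaceProd := by
  refine le_antisymm kTop_le fun s hs => ?_
  rw [isOpen_kTop_iff] at hs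
  rw [isOpen_iff_forall_mem_open]
  rintro ⟨a, b⟩ hab
  -- the slice at b is open in C
  have hU0 : IsOpen {c : C | (c, b) ∈ s} := by
    have := hs (CompHaus.of C) (fun c => (c, b)) (Continuous.prodMk continuous_id continuous_const)
    exact this
  -- choose a compact neighborhood Q of a inside the slice
  obtain ⟨Q, hQc, haQ, hQU⟩ := exists_compact_subset hU0 hab
  -- V is the set of y whose Q-tube lies in s
  set V : Set Y := {y : Y | ∀ c ∈ Q, (c, y) ∈ s} with hV
  have hbV : b ∈ V := fun c hc => hQU hc
  have hVopen : IsOpen V := by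
    rw [← hY, isOpen_kTop_iff]
    intro D q hq
    have hCD : CompactSpace (C × D) := inferInstance
    have hO : IsOpen ((Prod.map (id : C → C) q) ⁻¹' s) :=
      hs (CompHaus.of (C × D)) (Prod.map id q) (continuous_id.prodMap hq)
    rw [isOpen_iff_forall_mem_open]
    intro d hd
    obtain ⟨u, v, huo, hvo, hQu, hdv, huv⟩ :=
      generalized_tube_lemma hQc isCompact_singleton hO
        (by rintro ⟨c, d'⟩ ⟨hc, hd'⟩; rw [Set.mem_singleton_iff] at hd'; subst hd'; exact hd c hc)
    refine ⟨v, ?_, hvo, hdv rfl⟩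
    intro d' hd' c hc
    have h2 := huv (Set.mk_mem_prod (hQu hc) hd')
    simpa using h2
  refine ⟨interior Q ×ˢ V, ?_, (isOpen_interior.prod hVopen), ⟨haQ, hbV⟩⟩
  rintro ⟨c, y⟩ ⟨hc, hy⟩
  exact hy c (interior_subset hc)

theorem kTop_proper_condition {X Y Z : Type u}
    [tX : TopologicalSpace X] [tY : TopologicalSpace Y] [tZ : TopologicalSpace Z]
    (hX : kTop X = tX) (hY : kTop Y = tY) (hZ : kTop Z = tZ)
    (f : X × Y → Z) (hf : Continuous[kTop (X × Y), tZ] f) :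
    ∃ g : X → C(Y, Z), (∀ x y, g x y = f (x, y)) ∧
      Continuous[tX, kTop C(Y, Z)] g := by
  have hfc : ∀ x : X, Continuous fun y => f (x, y) := by
    intro x
    have h1 := kTop_mono (A := Y) (B := X × Y) (Continuous.prodMk_right x)
    rw [hY] at h1
    exact @Continuous.comp _ _ _ tY (kTop (X × Y)) tZ _ _ hf h1
  refine ⟨fun x => ⟨fun y => f (x, y), hfc x⟩, fun x y => rfl, ?_⟩
  set g : X → C(Y, Z) := fun x => ⟨fun y => f (x, y), hfc x⟩ with hg
  have hgco : Continuous g := by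
    rw [← hX]
    apply continuous_from_kTop
    intro K c hc
    have hk : kTop (↥K × Y) = instTopologicalSpaceProd := kTop_prod_compHaus hY
    have hmap := kTop_mono (A := ↥K × Y) (B := X × Y) (hc.prodMap continuous_id)
    rw [hk] at hmap
    have hF : Continuous fun p : ↥K × Y => f (c p.1, p.2) :=
      @Continuous.comp _ _ _ instTopologicalSpaceProd (kTop (X × Y)) tZ _ _ hf hmap
    have heq : g ∘ c = ⇑(ContinuousMap.curry ⟨fun p : K × Y => f (c p.1, p.2), hF⟩) := by
      funext p
      ext y
      rfl
    rw [heq]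
    exact ContinuousMap.continuous _
  have := kTop_mono hgco
  rwa [hX] at this
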